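/- Let A, B, C, D > 0 be real numbers and let s₁, s₂ ∈ (0,2) and s₃ ∈ (2,∞) be real. Then the set of positive real numbers t satisfying 2·A·t = B·s₁·t^(s₁−1) + C·s₂·t^(s₂−1) + D·s₃·t^(s₃−1) (i.e., the set of positive critical points of f(t) := A·t² − B·t^(s₁) − C·t^(s₂) − D·t^(s₃)) has at most two elements. -/
import Mathlib

open Set Real

/-- A strictly convex `c * exp (a * x)` for `c > 0`, `a ≠ 0`. -/
lemma strictConvexOn_const_mul_exp {c a : ℝ} (hc : 0 < c) (ha : a ≠ 0) :
    StrictConvexOn ℝ Set.univ (fun x : ℝ => c * Real.exp (a * x)) := by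
  refine ⟨convex_univ, fun x _ y _ hxy p q hp hq hpq => ?_⟩
  have hne : a * x ≠ a * y := fun h => hxy (mul_left_cancel₀ ha h)
  have h := strictConvexOn_exp.2 (Set.mem_univ (a * x)) (Set.mem_univ (a * y)) hne hp hq hpq
  simp only [smul_eq_mul] at h ⊢
  have : a * (p * x + q * y) = p * (a * x) + q * (a * y) := by ring
  rw [this]
  nlinarith [h, hc]

lemma key_no_three (g : ℝ → ℝ) (hg : StrictConvexOn ℝ Set.univ g) {c : ℝ} {x y z : ℝ}
    (hxy : x < y) (hyz : y < z) (hx : g x = c) (hy : g y = c) (hz : g z = c) : False := by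
  have h := hg.lt_on_openSegment (Set.mem_univ x) (Set.mem_univ z)
    (ne_of_lt (hxy.trans hyz))
    (by rw [openSegment_eq_Ioo (hxy.trans hyz)]; exact ⟨hxy, hyz⟩)
  rw [hx, hz, hy] at h
  simp at h

lemma exists_three_of_two_lt {α : Type*} {s : Set α} (h : 2 < s.encard) :
    ∃ a b c, a ∈ s ∧ b ∈ s ∧ c ∈ s ∧ a ≠ b ∧ a ≠ c ∧ b ≠ c := by
  obtain ⟨a, b, ha, hb, hab⟩ := Set.one_lt_encard_iff.1 (lt_of_lt_of_le (by norm_num) h.le)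
  have h2 : ({a, b} : Set α).encard ≤ 2 := by
    refine (Set.encard_insert_le _ _).trans ?_
    rw [Set.encard_singleton]; norm_num
  have hpos : 0 < (s \ {a, b}).encard := by
    have hle : s.encard - 2 ≤ (s \ {a, b}).encard :=
      le_trans (tsub_le_tsub_left h2 _) (Set.tsub_encard_le_encard_diff s {a, b})
    have : (0 : ℕ∞) < s.encard - 2 := by
      rw [tsub_pos_iff_lt]; exact h
    exact lt_of_lt_of_le this hle
  rw [Set.encard_pos] at hpos
  obtain ⟨c, hc⟩ := hpos
  refine ⟨a, b, c, ha, hb, hc.1, hab, ?_, ?_⟩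
  · rintro rfl; exact hc.2 (Or.inl rfl)
  · rintro rfl; exact hc.2 (Or.inr rfl)

lemma strictConvexOn_level_encard_le_two (g : ℝ → ℝ) (hg : StrictConvexOn ℝ Set.univ g)
    (c : ℝ) : {x : ℝ | g x = c}.encard ≤ 2 := by
  by_contra h
  push_neg at h
  obtain ⟨a, b, d, ha, hb, hd, hab, had, hbd⟩ := exists_three_of_two_lt h
  simp only [Set.mem_setOf_eq] at ha hb hd
  rcases hab.lt_or_gt with h1 | h1 <;> rcases had.lt_or_gt with h2 | h2 <;>
    rcases hbd.lt_or_gt with h3 | h3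
  · exact key_no_three g hg h1 h3 ha hb hd
  · exact key_no_three g hg h2 h3 ha hd hb
  · linarith
  · exact key_no_three g hg h2 h1 hd ha hb
  · exact key_no_three g hg h1 h2 hb ha hd
  · linarith
  · exact key_no_three g hg h3 h2 hb hd ha
  · exact key_no_three g hg h3 h1 hd hb ha

/-- The set of positive critical points of `f(t) = A t^2 - B t^{s₁} - C t^{s₂} - D t^{s₃}`,
i.e. positive roots of `2At = B s₁ t^{s₁-1} + C s₂ t^{s₂-1} + D s₃ t^{s₃-1}`, has at most
two elements. -/
theorem at_most_two_positive_critical_points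
    (A B C D s₁ s₂ s₃ : ℝ) (hA : 0 < A) (hB : 0 < B) (hC : 0 < C) (hD : 0 < D)
    (hs₁ : s₁ ∈ Set.Ioo (0 : ℝ) 2) (hs₂ : s₂ ∈ Set.Ioo (0 : ℝ) 2) (hs₃ : 2 < s₃) :
    {t : ℝ | 0 < t ∧
      2 * A * t = B * s₁ * t ^ (s₁ - 1) + C * s₂ * t ^ (s₂ - 1) + D * s₃ * t ^ (s₃ - 1)}.encard
      ≤ 2 := by
  set S : Set ℝ := {t : ℝ | 0 < t ∧
      2 * A * t = B * s₁ * t ^ (s₁ - 1) + C * s₂ * t ^ (s₂ - 1) + D * s₃ * t ^ (s₃ - 1)}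
  set g : ℝ → ℝ := fun x =>
    B * s₁ * Real.exp ((s₁ - 2) * x) + C * s₂ * Real.exp ((s₂ - 2) * x)
      + D * s₃ * Real.exp ((s₃ - 2) * x)
  have hg : StrictConvexOn ℝ Set.univ g := by
    refine StrictConvexOn.add (StrictConvexOn.add ?_ ?_) ?_
    · exact strictConvexOn_const_mul_exp (mul_pos hB hs₁.1) (by nlinarith [hs₁.2])
    · exact strictConvexOn_const_mul_exp (mul_pos hC hs₂.1) (by nlinarith [hs₂.2])
    · exact strictConvexOn_const_mul_exp (mul_pos hD (two_pos.trans hs₃)) (by nlinarith [hs₃])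
  have hsub : Real.log '' S ⊆ {x : ℝ | g x = 2 * A} := by
    rintro _ ⟨t, ⟨ht, heq⟩, rfl⟩
    have hrw : ∀ s : ℝ, Real.exp ((s - 2) * Real.log t) = t ^ (s - 2) := fun s => by
      rw [Real.rpow_def_of_pos ht, mul_comm]
    have hts : ∀ s : ℝ, t ^ (s - 1) = t ^ (s - 2) * t := fun s => by
      rw [show s - 1 = (s - 2) + 1 by ring, Real.rpow_add ht, Real.rpow_one]
    simp only [Set.mem_setOf_eq, g, hrw]
    rw [hts s₁, hts s₂, hts s₃] at heq
    have hkey : (B * s₁ * t ^ (s₁ - 2) + C * s₂ * t ^ (s₂ - 2) + D * s₃ * t ^ (s₃ - 2)) * t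
        = (2 * A) * t := by linear_combination - heq
    exact mul_right_cancel₀ ht.ne' hkey
  have hinj : Set.InjOn Real.log S := by
    intro x hx y hy hxy
    have := Real.exp_log hx.1
    have := Real.exp_log hy.1
    rw [← Real.exp_log hx.1, ← Real.exp_log hy.1, hxy]
  calc S.encard = (Real.log '' S).encard := (hinj.encard_image).symm
    _ ≤ ({x : ℝ | g x = 2 * A}).encard := Set.encard_le_encard hsub
    _ ≤ 2 := strictConvexOn_level_encard_le_two g hg (2 * A)
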